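/- Let G be a finite connected graph on at least three vertices that has a spanning subgraph which is a caterpillar tree. Then the square G^2 of G has a Hamilton cycle. -/

import Mathlib

open SimpleGraph

universe u w

/-- The square of a graph: join distinct vertices at distance at most 2. -/
def square {V : Type u} (G : SimpleGraph V) : SimpleGraph V where
  Adj u v := u ≠ v ∧ (G.Adj u v ∨ ∃ x, G.Adj u x ∧ G.Adj x v)
  symm := ⟨by
    rintro u v ⟨h, h' | ⟨x, h1, h2⟩⟩
    · exact ⟨h.symm, Or.inl h'.symm⟩
    · exact ⟨h.symm, Or.inr ⟨x, h2.symm, h1.symm⟩⟩⟩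
  loopless := ⟨fun u h => h.1 rfl⟩

/-- A caterpillar: a tree such that deleting all its leaves leaves a path
(possibly empty or a single vertex), i.e. the graph induced on the non-leaves is
connected (if nonempty), acyclic and of maximum degree at most 2. -/
def IsCaterpillar {V : Type u} (T : SimpleGraph V) : Prop :=
  T.IsTree ∧
    (T.induce {x | (T.neighborSet x).ncard ≠ 1}).Preconnected ∧
    (T.induce {x | (T.neighborSet x).ncard ≠ 1}).IsAcyclic ∧
    ∀ x, ((T.induce {x | (T.neighborSet x).ncard ≠ 1}).neighborSet x).ncard ≤ 2

namespace CatSq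

variable {V : Type u}

def mkWalk (G : SimpleGraph V) : ∀ (x : V) (l : List V) (y : V),
    List.IsChain G.Adj (x :: (l ++ [y])) → G.Walk x y
  | x, [], y, h => SimpleGraph.Walk.cons (by simpa using (List.chain_cons.mp h).1) SimpleGraph.Walk.nil
  | x, a :: l, y, h =>
      SimpleGraph.Walk.cons (List.chain_cons.mp h).1 (mkWalk G a l y (List.chain_cons.mp h).2)

lemma mkWalk_support (G : SimpleGraph V) : ∀ (x : V) (l : List V) (y : V)
    (h : List.IsChain G.Adj (x :: (l ++ [y]))), (mkWalk G x l y h).support = x :: (l ++ [y])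
  | x, [], y, h => rfl
  | x, a :: l, y, h => by
      simp [mkWalk, mkWalk_support G a l y (List.chain_cons.mp h).2]

lemma not_revEdge_mem_edges (G : SimpleGraph V) {u v : V} (p : G.Walk u v) (hp : p.IsPath)
    (h2 : 2 ≤ p.length) : s(v, u) ∉ p.edges := by
  cases p with
  | nil => simp at h2
  | cons h q =>
    rename_i w
    rw [Walk.cons_isPath_iff] at hp
    rw [Walk.edges_cons]
    intro hmem
    rcases List.mem_cons.mp hmem with he | he
    · rw [Sym2.eq_iff] at he
      rcases he with ⟨rfl, rfl⟩ | ⟨rfl, -⟩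
      · exact G.loopless.irrefl _ h
      · have := (Walk.isPath_iff_eq_nil (p := q)).mp hp.1
        subst this
        simp at h2
    · exact hp.2 (Walk.snd_mem_support_of_mem_edges q he)


lemma hamiltonian_of_list (G : SimpleGraph V) [Fintype V] [DecidableEq V] (a : V) (l : List V)
    (hn : (a :: l).Nodup) (hc : ∀ v : V, v ∈ a :: l) (hlen : 3 ≤ (a :: l).length)
    (hchain : List.IsChain G.Adj (a :: (l ++ [a]))) :
    ∃ b, ∃ p : G.Walk b b, p.IsHamiltonianCycle := by
  match l with
  | [] => simp at hlen
  | c :: l' =>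
    rw [List.cons_append, List.chain_cons] at hchain
    obtain ⟨h1, hch2⟩ := hchain
    set p := mkWalk G c l' a hch2 with hp
    have hsupp : p.support = c :: (l' ++ [a]) := mkWalk_support G c l' a hch2
    have hperm : (c :: (l' ++ [a])).Perm (a :: c :: l') := by
      simpa using List.perm_append_singleton a (c :: l')
    have hpath : p.IsPath := by
      rw [Walk.isPath_def, hsupp]
      exact hperm.nodup_iff.mpr hn
    have hlenp : 2 ≤ p.length := by
      have h4 : p.length + 1 = l'.length + 2 := by
        rw [← Walk.length_support, hsupp]; simp
      simp only [List.length_cons] at hlen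
      omega
    have hcyc : (Walk.cons h1 p).IsCycle := by
      rw [Walk.cons_isCycle_iff]
      exact ⟨hpath, not_revEdge_mem_edges G p hpath hlenp⟩
    refine ⟨a, Walk.cons h1 p, ?_⟩
    rw [Walk.isHamiltonianCycle_iff_isCycle_and_support_count_tail_eq_one]
    refine ⟨hcyc, fun x => ?_⟩
    rw [Walk.support_cons, List.tail_cons, hsupp]
    exact List.count_eq_one_of_mem (hperm.nodup_iff.mpr hn) (hperm.mem_iff.mpr (hc x))

lemma mem_of_closed (T : SimpleGraph V) (A : Set V) (hA : ∀ a ∈ A, T.neighborSet a ⊆ A)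
    {x z : V} (hx : x ∈ A) (h : T.Reachable x z) : z ∈ A := by
  obtain ⟨w⟩ := h
  induction w with
  | nil => exact hx
  | cons h p ih => exact ih (hA _ hx h)

def ordr : List (V × List V) → List V
  | [] => []
  | (v, L) :: r => v :: ((ordr r).reverse ++ L)

lemma ordr_ne_nil {c : List (V × List V)} (h : c ≠ []) : ordr c ≠ [] := by
  match c with
  | (v, L) :: r => simp [ordr]

lemma ordr_perm : ∀ c : List (V × List V), (ordr c).Perm (c.flatMap fun p => p.1 :: p.2)
  | [] => List.Perm.refl _
  | (v, L) :: r => by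
    simp only [ordr, List.flatMap_cons]
    refine List.Perm.cons v ?_
    refine ((List.reverse_perm _).append_right L).trans ?_
    refine ((ordr_perm r).append_right L).trans ?_
    exact List.perm_append_comm

lemma getLast_congr {α : Type*} {l₁ l₂ : List α} (h : l₁ = l₂) (h₁ : l₁ ≠ []) :
    l₁.getLast h₁ = l₂.getLast (h ▸ h₁) := by subst h; rfl

lemma ordr_getLast (v : V) (L : List V) (r : List (V × List V)) {x : V}
    (hx : (ordr ((v, L) :: r)).getLast (by simp [ordr]) = x) :
    (x = v ∧ L = [] ∧ r = []) ∨ x ∈ L ∨ (∃ h : r ≠ [], x = (r.head h).1) := by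
  simp only [ordr] at hx
  match hL : L, hr : r with
  | b :: L', _ =>
    right; left
    rw [← hx]
    have h2 : (b :: L' : List V) ≠ [] := by simp
    rw [List.getLast_cons (by simp), List.getLast_append_of_ne_nil _ h2]
    exact List.getLast_mem h2
  | [], [] =>
    left
    simp only [ordr, List.reverse_nil, List.append_nil] at hx
    exact ⟨hx.symm ▸ rfl, rfl, rfl⟩
  | [], (w, L') :: r' =>
    right; right
    refine ⟨by simp, ?_⟩
    rw [← hx]
    have hnn : (ordr ((w, L') :: r')).reverse ≠ [] := by simp [ordr]
    rw [getLast_congr (by rw [List.append_nil] :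
      (v :: ((ordr ((w, L') :: r')).reverse ++ [])) = v :: (ordr ((w, L') :: r')).reverse)]
    rw [List.getLast_cons hnn, List.getLast_reverse hnn]
    rfl

def R (T : SimpleGraph V) (a b : V) : Prop := T.Adj a b ∨ ∃ z, T.Adj a z ∧ T.Adj z b

lemma R_symm (T : SimpleGraph V) {a b : V} (h : R T a b) : R T b a := by
  rcases h with h | ⟨z, h1, h2⟩
  · exact Or.inl h.symm
  · exact Or.inr ⟨z, h2.symm, h1.symm⟩

lemma chain'_of_adj (T : SimpleGraph V) (v : V) (L : List V) (hL : ∀ ℓ ∈ L, T.Adj v ℓ) :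
    List.IsChain (R T) L := by
  refine List.Pairwise.isChain ?_
  refine List.pairwise_iff_forall_sublist.mpr ?_
  intro a b hab
  have ha := hL a (hab.subset (by simp))
  have hb := hL b (hab.subset (by simp))
  exact Or.inr ⟨v, ha.symm, hb⟩

lemma ordr_chain (T : SimpleGraph V) : ∀ c : List (V × List V),
    List.IsChain T.Adj (c.map Prod.fst) →
    (∀ p ∈ c, ∀ ℓ ∈ p.2, T.Adj p.1 ℓ) →
    List.IsChain (R T) (ordr c)
  | [] => fun _ _ => List.isChain_nil
  | (v, L) :: r => by
    intro h1 h2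
    have h1' : List.IsChain T.Adj (r.map Prod.fst) := by
      simpa using h1.tail
    have h2' : ∀ p ∈ r, ∀ ℓ ∈ p.2, T.Adj p.1 ℓ := fun p hp => h2 p (List.mem_cons_of_mem _ hp)
    have ih := ordr_chain T r h1' h2'
    have hLadj : ∀ ℓ ∈ L, T.Adj v ℓ := fun ℓ hℓ => h2 (v, L) (List.mem_cons_self) ℓ hℓ
    -- adjacency v to the head of r (if any)
    have hvr : ∀ (h : r ≠ []), T.Adj v (r.head h).1 := by
      intro h
      match r with
      | (w, L') :: r' =>
        simp only [List.map_cons, List.isChain_cons_cons] at h1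
        exact h1.1
    show List.IsChain (R T) (v :: ((ordr r).reverse ++ L))
    rw [List.isChain_cons]
    constructor
    · -- head junction
      intro y hy
      rcases r with _ | ⟨⟨v2, L2⟩, r'⟩
      · simp only [ordr, List.reverse_nil, List.nil_append] at hy
        exact Or.inl (hLadj y (List.mem_of_mem_head? hy))
      ·
        have hnn : ordr ((v2, L2) :: r') ≠ [] := ordr_ne_nil (by simp)
        rw [List.head?_append_of_ne_nil _ (by simpa using hnn)] at hy
        rw [List.head?_reverse] at hy
        rw [List.getLast?_eq_getLast hnn] at hy
        have hyx : (ordr ((v2, L2) :: r')).getLast hnn = y := (Option.mem_some_iff.mp hy)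
        have hy' := ordr_getLast v2 L2 r' hyx
        have hadj2 : T.Adj v v2 := hvr (by simp)
        rcases hy' with ⟨rfl, -, -⟩ | hyL | ⟨hne, rfl⟩
        · exact Or.inl hadj2
        · refine Or.inr ⟨v2, hadj2, ?_⟩
          exact h2 (v2, L2) (by simp) _ hyL
        · refine Or.inr ⟨v2, hadj2, ?_⟩
          have : List.IsChain T.Adj (v2 :: (r'.map Prod.fst)) := by simpa using h1'
          match r' with
          | (v3, L3) :: r'' =>
            simp only [List.map_cons, List.isChain_cons_cons] at this
            exact this.1
    · -- chain on (ordr r).reverse ++ L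
      refine List.IsChain.append ?_ (chain'_of_adj T v L hLadj) ?_
      · rw [List.isChain_reverse]
        exact ih.imp (fun a b h => R_symm T h)
      · intro x hx y hy
        rw [List.getLast?_reverse] at hx
        rcases r with _ | ⟨⟨v2, L2⟩, r'⟩
        · simp [ordr] at hx
        ·
          have hnn : ordr ((v2, L2) :: r') ≠ [] := ordr_ne_nil (by simp)
          have hhead : (ordr ((v2, L2) :: r')).head? = some v2 := by
            simp [ordr]
          rw [hhead] at hx
          obtain rfl := Option.mem_some_iff.mp hx
          exact Or.inr ⟨v, (hvr (by simp) : T.Adj v v2).symm, hLadj y (List.mem_of_mem_head? hy)⟩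


lemma exists_hamList {W : Type w} [Fintype W] [Nonempty W] (H : SimpleGraph W)
    (hconn : H.Preconnected) (hdeg : ∀ x, (H.neighborSet x).ncard ≤ 2) :
    ∃ s : List W, s.Nodup ∧ (∀ x : W, x ∈ s) ∧ List.IsChain H.Adj s := by
  classical
  set N : Set ℕ := {n | ∃ (u v : W) (p : H.Walk u v), p.IsPath ∧ p.length = n} with hN
  have hne : N.Nonempty := by
    obtain ⟨u⟩ := ‹Nonempty W›
    exact ⟨0, u, u, Walk.nil, Walk.IsPath.nil, rfl⟩
  have hbdd : BddAbove N := by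
    refine ⟨Fintype.card W, fun n hn => ?_⟩
    obtain ⟨u, v, p, hp, rfl⟩ := hn
    exact hp.length_lt.le
  obtain ⟨u, v, p, hp, hlen⟩ := Nat.sSup_mem hne hbdd
  -- maximality: no path has length > sSup N
  have hmax : ∀ (a b : W) (q : H.Walk a b), q.IsPath → q.length ≤ sSup N := by
    intro a b q hq
    exact le_csSup hbdd ⟨a, b, q, hq, rfl⟩
  -- no vertex outside support is adjacent to an endpoint
  have hnoext : ∀ y : W, y ∉ p.support → ¬ H.Adj y u ∧ ¬ H.Adj y v := by
    intro y hy
    constructor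
    · intro hadj
      have hq : (Walk.cons hadj p).IsPath := (Walk.cons_isPath_iff hadj p).mpr ⟨hp, hy⟩
      have := hmax _ _ _ hq
      simp only [Walk.length_cons, hlen] at this
      omega
    · intro hadj
      have hy' : y ∉ p.reverse.support := by rwa [Walk.support_reverse, List.mem_reverse]
      have hq : (Walk.cons hadj p.reverse).IsPath :=
        (Walk.cons_isPath_iff hadj p.reverse).mpr ⟨hp.reverse, hy'⟩
      have := hmax _ _ _ hq
      simp only [Walk.length_cons, Walk.length_reverse, hlen] at this
      omega
  -- the support covers everything
  have hcov : ∀ x : W, x ∈ p.support := by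
    by_contra hx
    push_neg at hx
    obtain ⟨w, hw⟩ := hx
    obtain ⟨q⟩ := hconn u w
    obtain ⟨d, hd, hdfst, hdsnd⟩ :=
      q.exists_boundary_dart {x | x ∈ p.support} (p.start_mem_support) hw
    set x := d.fst with hxdef
    set y := d.snd with hydef
    have hadjxy : H.Adj x y := d.adj
    have hyns : y ∉ p.support := hdsnd
    have hxs : x ∈ p.support := hdfst
    have hxu : x ≠ u := fun h => (hnoext y hyns).1 (h ▸ hadjxy.symm)
    have hxv : x ≠ v := fun h => (hnoext y hyns).2 (h ▸ hadjxy.symm)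
    -- next
    have hxdl : x ∈ p.support.dropLast := by
      have hsplit := List.dropLast_append_getLast (l := p.support) (by simp)
      rw [p.getLast_support] at hsplit
      have := hxs
      rw [← hsplit, List.mem_append] at this
      rcases this with h | h
      · exact h
      · simp at h; exact absurd h hxv
    rw [← Walk.map_fst_darts, List.mem_map] at hxdl
    obtain ⟨d1, hd1, hd1x⟩ := hxdl
    set nxt := d1.snd with hnxt
    have hadjnxt : H.Adj x nxt := hd1x ▸ d1.adj
    have hnxtmem : nxt ∈ p.support := p.dart_snd_mem_support_of_mem_darts hd1
    -- prev
    have hxtl : x ∈ p.support.tail := by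
      have := hxs
      rw [Walk.support_eq_cons, List.mem_cons] at this
      rcases this with h | h
      · exact absurd h hxu
      · exact h
    rw [← Walk.map_snd_darts, List.mem_map] at hxtl
    obtain ⟨d2, hd2, hd2x⟩ := hxtl
    set prv := d2.fst with hprv
    have hadjprv : H.Adj x prv := (hd2x ▸ d2.adj).symm
    have hprvmem : prv ∈ p.support := p.dart_fst_mem_support_of_mem_darts hd2
    -- prev ≠ next
    have hpn : prv ≠ nxt := by
      intro h
      have e1 : d1.edge = s(x, nxt) := by rw [← hd1x, hnxt]; rfl
      have e2 : d2.edge = s(prv, x) := by rw [← hd2x, hprv]; rfl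
      have hedge : d1.edge = d2.edge := by rw [e1, e2, h]; exact Sym2.eq_swap
      have hnd : (p.darts.map SimpleGraph.Dart.edge).Nodup := hp.isTrail.edges_nodup
      have hdd : d1 = d2 := List.inj_on_of_nodup_map hnd hd1 hd2 hedge
      have : x = nxt := by rw [← hd1x, hdd, ← hprv, h]
      exact hadjnxt.ne this
    have hyp : y ≠ prv := fun h => hyns (h ▸ hprvmem)
    have hyn : y ≠ nxt := fun h => hyns (h ▸ hnxtmem)
    -- degree contradiction
    have hsub : ({prv, nxt, y} : Set W) ⊆ H.neighborSet x := by
      intro z hz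
      rcases hz with rfl | rfl | rfl
      · exact hadjprv
      · exact hadjnxt
      · exact hadjxy
    have h33 : ({prv, nxt, y} : Set W).ncard = 3 := by
      rw [Set.ncard_insert_of_notMem (by simp [hpn, hyp.symm]) (Set.toFinite _),
        Set.ncard_pair hyn.symm]
    have := Set.ncard_le_ncard hsub (Set.toFinite _)
    rw [h33] at this
    have := hdeg x
    omega
  exact ⟨p.support, hp.support_nodup, hcov, p.isChain_adj_support⟩

lemma head_congr {α : Type*} {l₁ l₂ : List α} (h : l₁ = l₂) (h₁ : l₁ ≠ []) :
    l₁.head h₁ = l₂.head (h ▸ h₁) := by subst h; rfl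

lemma chain'_conj {α : Type*} {P Q : α → α → Prop} :
    ∀ {l : List α}, List.IsChain P l → List.IsChain Q l →
      List.IsChain (fun a b => P a b ∧ Q a b) l
  | [], _, _ => List.isChain_nil
  | [a], _, _ => List.isChain_singleton a
  | a :: b :: l, hp, hq => by
    rw [List.isChain_cons_cons] at *
    exact ⟨⟨hp.1, hq.1⟩, chain'_conj hp.2 hq.2⟩

end CatSq

open CatSq in
/-- The square of a finite connected graph on at least three vertices
having a spanning caterpillar is Hamiltonian. -/
theorem stmt_3 {V : Type u} [Fintype V] [DecidableEq V] (G : SimpleGraph V) (hconn : G.Connected)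
    (h3 : 3 ≤ Fintype.card V) (hspan : ∃ T : SimpleGraph V, T ≤ G ∧ IsCaterpillar T) :
    (square G).IsHamiltonian := by
  classical
  obtain ⟨T, hTG, hTree, hPre, hAcy, hDeg⟩ := hspan
  intro _
  set S : Set V := {x | (T.neighborSet x).ncard ≠ 1} with hS
  have hTconn : T.Connected := hTree.isConnected
  -- leaves have a unique neighbor
  have hleaf : ∀ x, x ∉ S → ∃ a, T.neighborSet x = {a} := by
    intro x hx
    exact Set.ncard_eq_one.mp (not_not.mp hx)
  -- no two mutually-pendant vertices
  have hK2 : ∀ x y : V, T.neighborSet x = {y} → T.neighborSet y = {x} → False := by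
    intro x y hxy hyx
    have hclosed : ∀ a ∈ ({x, y} : Set V), T.neighborSet a ⊆ ({x, y} : Set V) := by
      rintro a (rfl | rfl)
      · rw [hxy]; intro z hz; right; exact hz
      · rw [hyx]; intro z hz; left; exact hz
    have hall : ∀ z : V, z ∈ ({x, y} : Set V) := fun z =>
      mem_of_closed T _ hclosed (by left; rfl) (hTconn.preconnected x z)
    have : (Finset.univ : Finset V).card ≤ ({x, y} : Finset V).card := by
      apply Finset.card_le_card
      intro z _
      rcases hall z with rfl | rfl
      · simp
      · simp
    have h2 : ({x, y} : Finset V).card ≤ 2 := by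
      apply le_trans (Finset.card_insert_le _ _); simp
    rw [Finset.card_univ] at this
    omega
  -- the unique neighbor of a leaf is not a leaf
  have hnS : ∀ x a : V, T.neighborSet x = {a} → a ∈ S := by
    intro x a hxa
    by_contra ha
    obtain ⟨b, hab⟩ := hleaf a ha
    have hadjxa : T.Adj x a := by rw [← SimpleGraph.mem_neighborSet, hxa]; rfl
    have : x ∈ T.neighborSet a := hadjxa.symm
    rw [hab] at this
    cases this
    exact hK2 x a hxa hab
  -- S is nonempty
  have hSne : S.Nonempty := by
    obtain ⟨x⟩ : Nonempty V := by
      have : 0 < Fintype.card V := by omega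
      exact Fintype.card_pos_iff.mp this
    by_cases hx : x ∈ S
    · exact ⟨x, hx⟩
    · obtain ⟨a, hxa⟩ := hleaf x hx
      exact ⟨a, hnS x a hxa⟩
  haveI : Fintype ↥S := (S.toFinite).fintype
  haveI : Nonempty ↥S := hSne.to_subtype
  -- Hamiltonian list on the spine
  obtain ⟨s₀, hs₀nd, hs₀cov, hs₀ch⟩ := exists_hamList (T.induce S) hPre hDeg
  set spine : List V := s₀.map Subtype.val with hspinedef
  have hspnd : spine.Nodup := hs₀nd.map Subtype.val_injective
  have hspmemS : ∀ v ∈ spine, v ∈ S := by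
    intro v hv
    rw [hspinedef, List.mem_map] at hv
    obtain ⟨⟨w, hw⟩, -, rfl⟩ := hv
    exact hw
  have hspcov : ∀ v ∈ S, v ∈ spine := by
    intro v hv
    rw [hspinedef, List.mem_map]
    exact ⟨⟨v, hv⟩, hs₀cov _, rfl⟩
  have hspch : List.IsChain T.Adj spine := by
    rw [hspinedef, List.isChain_map]
    refine hs₀ch.imp ?_
    intro a b hab
    exact hab
  -- leaf lists
  set leafL : V → List V :=
    fun v => (Finset.univ.filter (fun x => x ∉ S ∧ T.Adj v x)).toList with hleafLdef
  have hleafmem : ∀ v x, x ∈ leafL v ↔ (x ∉ S ∧ T.Adj v x) := by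
    intro v x
    simp [hleafLdef, Finset.mem_toList]
  set c : List (V × List V) := spine.map (fun v => (v, leafL v)) with hcdef
  have h1 : List.IsChain T.Adj (c.map Prod.fst) := by
    rw [hcdef, List.map_map]
    have hid : (Prod.fst ∘ fun v : V => (v, leafL v)) = id := rfl
    rw [hid, List.map_id]
    exact hspch
  have h2 : ∀ p ∈ c, ∀ ℓ ∈ p.2, T.Adj p.1 ℓ := by
    intro p hp ℓ hℓ
    rw [hcdef, List.mem_map] at hp
    obtain ⟨v, -, rfl⟩ := hp
    exact ((hleafmem v ℓ).mp hℓ).2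
  -- the big list
  set l : List V := ordr c with hldef
  have hperm : l.Perm (spine.flatMap fun v => v :: leafL v) := by
    refine (ordr_perm c).trans ?_
    rw [hcdef, List.flatMap_map]
  have hBnd : (spine.flatMap fun v => v :: leafL v).Nodup := by
    rw [List.nodup_flatMap]
    constructor
    · intro v hv
      rw [List.nodup_cons]
      refine ⟨fun hvin => ?_, Finset.nodup_toList _⟩
      exact ((hleafmem v v).mp hvin).1 (hspmemS v hv)
    · refine List.Pairwise.imp_of_mem ?_ hspnd
      intro v w hv hw hvw
      intro x hxv hxw
      rcases List.mem_cons.mp hxv with rfl | hxv'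
      · rcases List.mem_cons.mp hxw with h | h
        · exact hvw h
        · exact ((hleafmem w x).mp h).1 (hspmemS _ hv)
      · rcases List.mem_cons.mp hxw with rfl | hxw'
        · exact ((hleafmem v x).mp hxv').1 (hspmemS _ hw)
        · obtain ⟨hxS, hvx⟩ := (hleafmem v x).mp hxv'
          obtain ⟨-, hwx⟩ := (hleafmem w x).mp hxw'
          obtain ⟨a, hxa⟩ := hleaf x hxS
          have h1' : v ∈ T.neighborSet x := hvx.symm
          have h2' : w ∈ T.neighborSet x := hwx.symm
          rw [hxa] at h1' h2'
          cases h1'; cases h2'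
          exact hvw rfl
  have hlnd : l.Nodup := hperm.nodup_iff.mpr hBnd
  have hlcov : ∀ x : V, x ∈ l := by
    intro x
    rw [hperm.mem_iff, List.mem_flatMap]
    by_cases hx : x ∈ S
    · exact ⟨x, hspcov x hx, by simp⟩
    · obtain ⟨a, hxa⟩ := hleaf x hx
      have haS := hnS x a hxa
      have hadj : T.Adj a x := by
        have : a ∈ T.neighborSet x := by rw [hxa]; rfl
        exact this.symm
      exact ⟨a, hspcov a haS, List.mem_cons_of_mem _ ((hleafmem a x).mpr ⟨hx, hadj⟩)⟩
  have hllen : 3 ≤ l.length := by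
    have hsub : (Finset.univ : Finset V) ⊆ l.toFinset := fun x _ => List.mem_toFinset.mpr (hlcov x)
    have := Finset.card_le_card hsub
    rw [Finset.card_univ] at this
    have h2 := l.toFinset_card_le
    omega
  -- chain in the square
  have hchR : List.IsChain (R T) l := ordr_chain T c h1 h2
  have hchne : List.IsChain (fun a b : V => a ≠ b) l := List.Pairwise.isChain hlnd
  have hchT : List.IsChain (square T).Adj l := by
    have := chain'_conj hchne hchR
    exact this.imp (fun a b h => ⟨h.1, h.2⟩)
  have hmono : ∀ a b : V, (square T).Adj a b → (square G).Adj a b := by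
    rintro a b ⟨hne, h | ⟨z, hz1, hz2⟩⟩
    · exact ⟨hne, Or.inl (hTG h)⟩
    · exact ⟨hne, Or.inr ⟨z, hTG hz1, hTG hz2⟩⟩
  -- structure of spine / l
  rcases hsp : spine with _ | ⟨v1, rest⟩
  · rw [hsp] at hspcov
    obtain ⟨v, hv⟩ := hSne
    simpa using hspcov v hv
  have hcstruct : c = (v1, leafL v1) :: rest.map (fun v => (v, leafL v)) := by
    rw [hcdef, hsp]; rfl
  set crest := rest.map (fun v => (v, leafL v)) with hcrest
  have hlstruct : l = v1 :: ((ordr crest).reverse ++ leafL v1) := by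
    rw [hldef, hcstruct]; rfl
  -- closing edge
  have hlne : l ≠ [] := by rw [hlstruct]; simp
  have heqc : ordr ((v1, leafL v1) :: crest) = l := by rw [hldef, hcstruct]
  have hx0 : (ordr ((v1, leafL v1) :: crest)).getLast (by simp [ordr]) = l.getLast hlne :=
    getLast_congr heqc _
  have hlast := ordr_getLast v1 (leafL v1) crest hx0
  have hclose : (square T).Adj (l.getLast hlne) v1 := by
    rcases hlast with ⟨hx, hL, hr⟩ | hx | ⟨hr, hx⟩
    · exfalso
      have : l = [v1] := by rw [hlstruct, hL, hr]; simp [ordr]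
      rw [this] at hllen
      simp at hllen
    · have hadj : T.Adj v1 (l.getLast hlne) := ((hleafmem v1 _).mp hx).2
      exact ⟨hadj.ne', Or.inl hadj.symm⟩
    · have hch2 : List.IsChain T.Adj (v1 :: crest.map Prod.fst) := by
        have h1' := h1; rw [hcstruct] at h1'; simpa using h1'
      rcases hcr : crest with _ | ⟨⟨v2, L2⟩, crest'⟩
      · exact absurd hcr hr
      · have hxv2 : l.getLast hlne = v2 := by
          rw [hx, head_congr hcr]
          rfl
        rw [hcr, List.map_cons, List.isChain_cons_cons] at hch2
        have hadj : T.Adj v1 v2 := hch2.1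
        rw [hxv2]
        exact ⟨hadj.ne', Or.inl hadj.symm⟩
  -- assemble the cyclic chain
  have hbig : List.IsChain (square T).Adj (l ++ [v1]) := by
    refine List.IsChain.append hchT (List.isChain_singleton v1) ?_
    intro x hx y hy
    rw [List.getLast?_eq_getLast hlne] at hx
    obtain rfl := Option.mem_some_iff.mp hx
    obtain rfl := Option.mem_some_iff.mp hy
    exact hclose
  have hbigG : List.IsChain (square G).Adj (l ++ [v1]) := hbig.imp hmono
  have hchainG : List.IsChain (square G).Adj (v1 :: ((l.tail) ++ [v1])) := by
    have : l ++ [v1] = v1 :: (l.tail ++ [v1]) := by rw [hlstruct]; rfl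
    rw [this] at hbigG
    exact hbigG
  have hltail : l = v1 :: l.tail := by rw [hlstruct]; rfl
  refine hamiltonian_of_list (square G) v1 l.tail ?_ ?_ ?_ hchainG
  · rw [← hltail]; exact hlnd
  · intro v; rw [← hltail]; exact hlcov v
  · rw [← hltail]; exact hllen
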